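/- Let M be an n×n real invertible matrix and let C be a subset of the indices with complement C̄ such that both M and M_{C̄C̄} have all singular values in [σmin, σmax] with σmin > 0. Let M̃ be an n×n matrix with ‖M − M̃‖_F ≤ ε for some ε < 0.1·n^{−10}·σmin·(σmax/σmin)^{−2}. Then M̃ and M̃_{C̄C̄} are invertible and ‖SC(M, C) − SC(M̃, C)‖_F ≤ n^{30}·(σmax/σmin)⁴·ε. -/

import Mathlib

open Matrix

/-- Euclidean norm of a vector. -/
noncomputable def vnorm {ι : Type*} [Fintype ι] (v : ι → ℝ) : ℝ :=
  Real.sqrt (∑ i, v i ^ 2)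

/-- Minimum singular value: the minimum of `‖Mx‖₂` over unit vectors `x`. -/
noncomputable def sigmaMin {ι κ' : Type*} [Fintype ι] [Fintype κ']
    (M : Matrix ι κ' ℝ) : ℝ :=
  ⨅ x : {x : κ' → ℝ // vnorm x = 1}, vnorm (M.mulVec x)

/-- Maximum singular value: the maximum of `‖Mx‖₂` over unit vectors `x`. -/
noncomputable def sigmaMax {ι κ' : Type*} [Fintype ι] [Fintype κ']
    (M : Matrix ι κ' ℝ) : ℝ :=
  ⨆ x : {x : κ' → ℝ // vnorm x = 1}, vnorm (M.mulVec x)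

/-- Frobenius norm of a matrix. -/
noncomputable def frob {ι κ' : Type*} [Fintype ι] [Fintype κ']
    (M : Matrix ι κ' ℝ) : ℝ :=
  Real.sqrt (∑ i, ∑ j, M i j ^ 2)

/-- The Schur complement `SC(M, C) = M_{CC} − M_{CC̄}·M_{C̄C̄}⁻¹·M_{C̄C}` of an `n×n`
matrix `M` onto a subset `C` of its indices (with complement `C̄`). -/
noncomputable def schurCompl {n : ℕ} (M : Matrix (Fin n) (Fin n) ℝ) (C : Finset (Fin n)) :
    Matrix {i // i ∈ C} {i // i ∈ C} ℝ :=
  M.submatrix Subtype.val Subtype.val -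
    M.submatrix (Subtype.val : {i // i ∈ C} → Fin n)
        (Subtype.val : {i // i ∈ Cᶜ} → Fin n) *
      (M.submatrix (Subtype.val : {i // i ∈ Cᶜ} → Fin n)
        (Subtype.val : {i // i ∈ Cᶜ} → Fin n))⁻¹ *
      M.submatrix (Subtype.val : {i // i ∈ Cᶜ} → Fin n)
        (Subtype.val : {i // i ∈ C} → Fin n)


section Helpers
variable {ι κ' μ' : Type*} [Fintype ι] [Fintype κ'] [Fintype μ']

lemma vnorm_nonneg (v : ι → ℝ) : 0 ≤ vnorm v := Real.sqrt_nonneg _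

lemma vnorm_sq (v : ι → ℝ) : vnorm v ^ 2 = ∑ i, v i ^ 2 :=
  Real.sq_sqrt (Finset.sum_nonneg fun _ _ => sq_nonneg _)

lemma vnorm_eq_norm (v : ι → ℝ) :
    vnorm v = ‖(WithLp.equiv 2 (ι → ℝ)).symm v‖ := by
  rw [EuclideanSpace.norm_eq]
  simp [vnorm, Real.norm_eq_abs, sq_abs]

lemma vnorm_add_le (u v : ι → ℝ) : vnorm (u + v) ≤ vnorm u + vnorm v := by
  simp only [vnorm_eq_norm]
  have : (WithLp.equiv 2 (ι → ℝ)).symm (u + v)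
      = (WithLp.equiv 2 (ι → ℝ)).symm u + (WithLp.equiv 2 (ι → ℝ)).symm v := rfl
  rw [this]; exact norm_add_le _ _

lemma vnorm_eq_zero {v : ι → ℝ} (h : vnorm v = 0) : v = 0 := by
  rw [vnorm_eq_norm, norm_eq_zero] at h
  exact congrArg (WithLp.equiv 2 (ι → ℝ)) h

lemma vnorm_smul (c : ℝ) (v : ι → ℝ) : vnorm (c • v) = |c| * vnorm v := by
  simp only [vnorm_eq_norm]
  have : (WithLp.equiv 2 (ι → ℝ)).symm (c • v)
      = c • (WithLp.equiv 2 (ι → ℝ)).symm v := rfl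
  rw [this, norm_smul, Real.norm_eq_abs]

lemma vnorm_single [DecidableEq ι] (j : ι) : vnorm (Pi.single j 1 : ι → ℝ) = 1 := by
  have : ∑ i, (Pi.single j 1 : ι → ℝ) i ^ 2 = 1 := by
    rw [Finset.sum_eq_single j] <;> simp +contextual [Pi.single_apply]
  rw [vnorm, this, Real.sqrt_one]

lemma frob_nonneg (M : Matrix ι κ' ℝ) : 0 ≤ frob M := Real.sqrt_nonneg _

lemma frob_sq (M : Matrix ι κ' ℝ) : frob M ^ 2 = ∑ i, ∑ j, M i j ^ 2 :=
  Real.sq_sqrt (Finset.sum_nonneg fun _ _ => Finset.sum_nonneg fun _ _ => sq_nonneg _)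

lemma frob_eq_vnorm (M : Matrix ι κ' ℝ) :
    frob M = vnorm (fun p : ι × κ' => M p.1 p.2) := by
  rw [frob, vnorm, Fintype.sum_prod_type]

lemma frob_add_le (X Y : Matrix ι κ' ℝ) : frob (X + Y) ≤ frob X + frob Y := by
  simp only [frob_eq_vnorm]
  exact le_trans (le_of_eq (by congr 1)) (vnorm_add_le (fun p : ι × κ' => X p.1 p.2)
    (fun p : ι × κ' => Y p.1 p.2))

lemma frob_neg (X : Matrix ι κ' ℝ) : frob (-X) = frob X := by
  simp [frob]

lemma frob_sub_le (X Y : Matrix ι κ' ℝ) : frob (X - Y) ≤ frob X + frob Y := by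
  rw [sub_eq_add_neg]
  exact le_trans (frob_add_le _ _) (by rw [frob_neg])

lemma frob_sub_comm (X Y : Matrix ι κ' ℝ) : frob (X - Y) = frob (Y - X) := by
  rw [← frob_neg (Y - X), neg_sub]

lemma frob_mulVec_le (A : Matrix ι κ' ℝ) (x : κ' → ℝ) :
    vnorm (A.mulVec x) ≤ frob A * vnorm x := by
  have h : ∑ i, (A.mulVec x) i ^ 2 ≤ (frob A * vnorm x) ^ 2 := by
    rw [mul_pow, frob_sq, vnorm_sq, Finset.sum_mul]
    refine Finset.sum_le_sum fun i _ => ?_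
    exact Finset.sum_mul_sq_le_sq_mul_sq Finset.univ (fun j => A i j) x
  calc vnorm (A.mulVec x) = Real.sqrt (∑ i, (A.mulVec x) i ^ 2) := rfl
    _ ≤ Real.sqrt ((frob A * vnorm x) ^ 2) := Real.sqrt_le_sqrt h
    _ = frob A * vnorm x := Real.sqrt_sq (mul_nonneg (frob_nonneg _) (vnorm_nonneg _))

lemma frob_mul_le (A : Matrix ι κ' ℝ) (B : Matrix κ' μ' ℝ) :
    frob (A * B) ≤ frob A * frob B := by
  have h : ∑ i, ∑ j, (A * B) i j ^ 2 ≤ (frob A * frob B) ^ 2 := by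
    rw [mul_pow, frob_sq, frob_sq]
    calc ∑ i, ∑ j, (A * B) i j ^ 2
        ≤ ∑ i, ∑ j, ((∑ k, A i k ^ 2) * ∑ k, B k j ^ 2) := by
          refine Finset.sum_le_sum fun i _ => Finset.sum_le_sum fun j _ => ?_
          calc (A * B) i j ^ 2 = (∑ k, A i k * B k j) ^ 2 := by rw [Matrix.mul_apply]
            _ ≤ (∑ k, A i k ^ 2) * ∑ k, B k j ^ 2 :=
                Finset.sum_mul_sq_le_sq_mul_sq Finset.univ _ _
      _ = (∑ i, ∑ j, A i j ^ 2) * ∑ i, ∑ j, B i j ^ 2 := by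
          rw [Finset.sum_mul]
          refine Finset.sum_congr rfl fun i _ => ?_
          rw [← Finset.mul_sum, Finset.sum_comm]
  calc frob (A * B) = Real.sqrt (∑ i, ∑ j, (A * B) i j ^ 2) := rfl
    _ ≤ Real.sqrt ((frob A * frob B) ^ 2) := Real.sqrt_le_sqrt h
    _ = frob A * frob B := Real.sqrt_sq (mul_nonneg (frob_nonneg _) (frob_nonneg _))

lemma sum_comp_le {f : ι → κ'} (hf : Function.Injective f) (h : κ' → ℝ)
    (hh : ∀ a, 0 ≤ h a) : ∑ i, h (f i) ≤ ∑ a, h a := by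
  letI : DecidableEq κ' := Classical.decEq _
  have himg : ∑ a ∈ Finset.univ.image f, h a = ∑ i, h (f i) :=
    Finset.sum_image (fun a _ b _ hab => hf hab)
  rw [← himg]
  exact Finset.sum_le_sum_of_subset_of_nonneg (Finset.subset_univ _)
    (fun a _ _ => hh a)

lemma frob_submatrix_le (M : Matrix ι κ' ℝ) {ι' κ'' : Type*} [Fintype ι'] [Fintype κ'']
    {f : ι' → ι} {g : κ'' → κ'} (hf : Function.Injective f) (hg : Function.Injective g) :
    frob (M.submatrix f g) ≤ frob M := by
  refine Real.sqrt_le_sqrt ?_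
  calc ∑ i, ∑ j, M (f i) (g j) ^ 2
      ≤ ∑ i, ∑ b, M (f i) b ^ 2 :=
        Finset.sum_le_sum fun i _ => sum_comp_le hg _ (fun a => sq_nonneg _)
    _ ≤ ∑ a, ∑ b, M a b ^ 2 :=
        sum_comp_le hf _ (fun a => Finset.sum_nonneg fun _ _ => sq_nonneg _)

lemma frob_sq_cols [DecidableEq κ'] (M : Matrix ι κ' ℝ) :
    frob M ^ 2 = ∑ j, vnorm (M.mulVec (Pi.single j 1)) ^ 2 := by
  rw [frob_sq, Finset.sum_comm]
  refine Finset.sum_congr rfl fun j _ => ?_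
  rw [vnorm_sq]
  refine Finset.sum_congr rfl fun i _ => ?_
  simp

lemma frob_le_of_cols [DecidableEq κ'] (M : Matrix ι κ' ℝ) {c : ℝ} (hc : 0 ≤ c)
    (h : ∀ j, vnorm (M.mulVec (Pi.single j 1)) ≤ c) :
    frob M ≤ Real.sqrt (Fintype.card κ') * c := by
  have h2 : frob M ^ 2 ≤ (Fintype.card κ') * c ^ 2 := by
    rw [frob_sq_cols]
    calc ∑ j, vnorm (M.mulVec (Pi.single j 1)) ^ 2
        ≤ ∑ _j : κ', c ^ 2 := Finset.sum_le_sum fun j _ =>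
          pow_le_pow_left₀ (vnorm_nonneg _) (h j) 2
      _ = (Fintype.card κ') * c ^ 2 := by simp [Finset.card_univ, mul_comm]
  calc frob M = Real.sqrt (frob M ^ 2) := (Real.sqrt_sq (frob_nonneg M)).symm
    _ ≤ Real.sqrt ((Fintype.card κ') * c ^ 2) := Real.sqrt_le_sqrt h2
    _ = Real.sqrt (Fintype.card κ') * c := by
        rw [Real.sqrt_mul (by positivity), Real.sqrt_sq hc]

end Helpers
section Sigma
variable {ι κ' : Type*} [Fintype ι] [Fintype κ']

lemma vnorm_zero : vnorm (0 : ι → ℝ) = 0 := by simp [vnorm]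

lemma bddBelow_range (M : Matrix ι κ' ℝ) :
    BddBelow (Set.range fun x : {x : κ' → ℝ // vnorm x = 1} => vnorm (M.mulVec x)) :=
  ⟨0, by rintro y ⟨x, rfl⟩; exact vnorm_nonneg _⟩

lemma bddAbove_range (M : Matrix ι κ' ℝ) :
    BddAbove (Set.range fun x : {x : κ' → ℝ // vnorm x = 1} => vnorm (M.mulVec x)) := by
  refine ⟨frob M, ?_⟩
  rintro y ⟨x, rfl⟩
  have := frob_mulVec_le M x
  rwa [x.2, mul_one] at this

lemma sigmaMin_lb {M : Matrix ι κ' ℝ} {σ : ℝ} (h : σ ≤ sigmaMin M) (x : κ' → ℝ) :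
    σ * vnorm x ≤ vnorm (M.mulVec x) := by
  by_cases hx : x = 0
  · simp [hx, vnorm_zero, Matrix.mulVec_zero]
  · have hvx : 0 < vnorm x :=
      (vnorm_nonneg x).lt_of_ne (fun h0 => hx (vnorm_eq_zero h0.symm))
    set u := (vnorm x)⁻¹ • x with hu_def
    have hu : vnorm u = 1 := by
      rw [hu_def, vnorm_smul, abs_inv, abs_of_pos hvx, inv_mul_cancel₀ hvx.ne']
    have h1 : sigmaMin M ≤ vnorm (M.mulVec u) := ciInf_le (bddBelow_range M) ⟨u, hu⟩
    have h2 : M.mulVec x = vnorm x • M.mulVec u := by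
      rw [hu_def, Matrix.mulVec_smul, smul_inv_smul₀ hvx.ne']
    rw [h2, vnorm_smul, abs_of_pos hvx, mul_comm]
    exact mul_le_mul_of_nonneg_left (h.trans h1) hvx.le

lemma sigmaMax_ub {M : Matrix ι κ' ℝ} {σ : ℝ} (h : sigmaMax M ≤ σ) (x : κ' → ℝ) :
    vnorm (M.mulVec x) ≤ σ * vnorm x := by
  by_cases hx : x = 0
  · simp [hx, vnorm_zero, Matrix.mulVec_zero]
  · have hvx : 0 < vnorm x :=
      (vnorm_nonneg x).lt_of_ne (fun h0 => hx (vnorm_eq_zero h0.symm))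
    set u := (vnorm x)⁻¹ • x with hu_def
    have hu : vnorm u = 1 := by
      rw [hu_def, vnorm_smul, abs_inv, abs_of_pos hvx, inv_mul_cancel₀ hvx.ne']
    have h1 : vnorm (M.mulVec u) ≤ sigmaMax M :=
      le_ciSup (bddAbove_range M) (⟨u, hu⟩ : {x : κ' → ℝ // vnorm x = 1})
    have h2 : M.mulVec x = vnorm x • M.mulVec u := by
      rw [hu_def, Matrix.mulVec_smul, smul_inv_smul₀ hvx.ne']
    rw [h2, vnorm_smul, abs_of_pos hvx, mul_comm σ (vnorm x)]
    exact mul_le_mul_of_nonneg_left (h1.trans h) hvx.le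

lemma sigmaMin_le_sigmaMax [Nonempty κ'] (M : Matrix ι κ' ℝ) :
    sigmaMin M ≤ sigmaMax M := by
  classical
  obtain ⟨j⟩ := ‹Nonempty κ'›
  have hu : vnorm (Pi.single j 1 : κ' → ℝ) = 1 := vnorm_single j
  exact le_trans (ciInf_le (bddBelow_range M) ⟨_, hu⟩)
    (le_ciSup (bddAbove_range M) (⟨_, hu⟩ : {x : κ' → ℝ // vnorm x = 1}))

lemma isUnit_of_lb {m : Type*} [Fintype m] [DecidableEq m] {N : Matrix m m ℝ} {σ : ℝ}
    (hσ : 0 < σ) (h : ∀ x, σ * vnorm x ≤ vnorm (N.mulVec x)) : IsUnit N.det := by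
  rw [← Matrix.isUnit_iff_isUnit_det, ← Matrix.mulVec_injective_iff_isUnit]
  intro x y hxy
  have h0 : N.mulVec (x - y) = 0 := by rw [Matrix.mulVec_sub, hxy, sub_self]
  have h1 := h (x - y)
  rw [h0, vnorm_zero] at h1
  have h2 : vnorm (x - y) = 0 :=
    le_antisymm (nonpos_of_mul_nonpos_right h1 hσ |>.trans le_rfl) (vnorm_nonneg _)
  have := vnorm_eq_zero h2
  exact sub_eq_zero.mp this

lemma frob_inv_le {m : Type*} [Fintype m] [DecidableEq m] {N : Matrix m m ℝ} {σ : ℝ}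
    (hσ : 0 < σ) (h : ∀ x, σ * vnorm x ≤ vnorm (N.mulVec x)) (hN : IsUnit N.det) :
    frob N⁻¹ ≤ Real.sqrt (Fintype.card m) * σ⁻¹ := by
  refine frob_le_of_cols _ (inv_nonneg.2 hσ.le) fun j => ?_
  have key : N.mulVec (N⁻¹.mulVec (Pi.single j 1)) = Pi.single j 1 := by
    rw [Matrix.mulVec_mulVec, Matrix.mul_nonsing_inv _ hN, Matrix.one_mulVec]
  have h1 := h (N⁻¹.mulVec (Pi.single j 1))
  rw [key, vnorm_single] at h1
  rw [← mul_le_mul_iff_right₀ hσ, mul_inv_cancel₀ hσ.ne']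
  exact h1

end Sigma

lemma mul3_le {a b c a' b' c' : ℝ} (ha : a ≤ a') (hb : b ≤ b') (hc : c ≤ c')
    (ha0 : 0 ≤ a) (hb0 : 0 ≤ b) (hc0 : 0 ≤ c) (ha0' : 0 ≤ a') (hb0' : 0 ≤ b') :
    a * b * c ≤ a' * b' * c' :=
  mul_le_mul (mul_le_mul ha hb hb0 ha0') hc hc0 (mul_nonneg ha0' hb0')

lemma frob_mul3_le {ι κ' μ' ν' : Type*} [Fintype ι] [Fintype κ'] [Fintype μ'] [Fintype ν']
    (P : Matrix ι κ' ℝ) (Q : Matrix κ' μ' ℝ) (R : Matrix μ' ν' ℝ) :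
    frob (P * Q * R) ≤ frob P * frob Q * frob R :=
  le_trans (frob_mul_le _ _)
    (mul_le_mul_of_nonneg_right (frob_mul_le _ _) (frob_nonneg _))

/-- **Stability of Schur complements under perturbation.**
If both `M` and `M_{C̄C̄}` have all singular values in `[σmin, σmax]` (`σmin > 0`), `M` is
invertible, and `‖M − M̃‖_F ≤ ε < 0.1·n⁻¹⁰·σmin·(σmax/σmin)⁻²`, then `M̃` and `M̃_{C̄C̄}` are
invertible, and `‖SC(M, C) − SC(M̃, C)‖_F ≤ n³⁰·(σmax/σmin)⁴·ε`. -/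
theorem schur_complement_perturbation {n : ℕ}
    (M Mt : Matrix (Fin n) (Fin n) ℝ) (C : Finset (Fin n))
    (σmin σmax ε : ℝ) (hσ : 0 < σmin)
    (hM : IsUnit M.det)
    (hMmin : σmin ≤ sigmaMin M) (hMmax : sigmaMax M ≤ σmax)
    (hBmin : σmin ≤ sigmaMin (M.submatrix (Subtype.val : {i // i ∈ Cᶜ} → Fin n)
      (Subtype.val : {i // i ∈ Cᶜ} → Fin n)))
    (hBmax : sigmaMax (M.submatrix (Subtype.val : {i // i ∈ Cᶜ} → Fin n)
      (Subtype.val : {i // i ∈ Cᶜ} → Fin n)) ≤ σmax)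
    (hε : frob (M - Mt) ≤ ε)
    (hεsmall : ε < 0.1 * (n : ℝ) ^ (-10 : ℝ) * σmin * (σmax / σmin)⁻¹ ^ 2) :
    IsUnit Mt.det ∧
      IsUnit (Mt.submatrix (Subtype.val : {i // i ∈ Cᶜ} → Fin n)
        (Subtype.val : {i // i ∈ Cᶜ} → Fin n)).det ∧
      frob (schurCompl M C - schurCompl Mt C) ≤
        (n : ℝ) ^ 30 * (σmax / σmin) ^ 4 * ε := by
  have hε0 : (0:ℝ) ≤ ε := le_trans (frob_nonneg _) hε
  rcases Nat.eq_zero_or_pos n with hn | hn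
  · exfalso
    subst hn
    rw [Nat.cast_zero, Real.zero_rpow (by norm_num)] at hεsmall
    simp only [mul_zero, zero_mul] at hεsmall
    linarith
  haveI : Nonempty (Fin n) := ⟨⟨0, hn⟩⟩
  have hσX : σmin ≤ σmax :=
    le_trans hMmin (le_trans (sigmaMin_le_sigmaMax M) hMmax)
  have hX0 : 0 < σmax := lt_of_lt_of_le hσ hσX
  set κ := σmax / σmin with hκdef
  have hκ1 : (1:ℝ) ≤ κ := (one_le_div hσ).mpr hσX
  have hεsm : ε ≤ 0.1 * σmin := by
    have h1 : (n:ℝ) ^ (-10 : ℝ) ≤ 1 :=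
      Real.rpow_le_one_of_one_le_of_nonpos (by exact_mod_cast hn) (by norm_num)
    have h2 : (κ⁻¹) ^ 2 ≤ 1 := by
      have : κ⁻¹ ≤ 1 := inv_le_one_of_one_le₀ hκ1
      have h0 : (0:ℝ) ≤ κ⁻¹ := by positivity
      nlinarith
    have h3 : (0:ℝ) ≤ (n:ℝ) ^ (-10 : ℝ) := Real.rpow_nonneg (Nat.cast_nonneg n) _
    have hab : (n:ℝ) ^ (-10 : ℝ) * (κ⁻¹ ^ 2) ≤ 1 :=
      mul_le_one₀ h1 (by positivity) h2
    nlinarith [mul_nonneg hσ.le (sub_nonneg.mpr hab)]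
  -- lower bound for Mt
  have hMt_lb : ∀ x, (0.5 * σmin) * vnorm x ≤ vnorm (Mt.mulVec x) := by
    intro x
    have h1 := sigmaMin_lb hMmin x
    have h2 : vnorm (M.mulVec x) ≤ vnorm (Mt.mulVec x) + vnorm ((M - Mt).mulVec x) := by
      have hsplit : M.mulVec x = Mt.mulVec x + (M - Mt).mulVec x := by
        rw [Matrix.sub_mulVec]; abel
      rw [hsplit]; exact vnorm_add_le _ _
    have h3 : vnorm ((M - Mt).mulVec x) ≤ ε * vnorm x :=
      le_trans (frob_mulVec_le _ _) (mul_le_mul_of_nonneg_right hε (vnorm_nonneg _))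
    have h4 : ε * vnorm x ≤ 0.1 * σmin * vnorm x :=
      mul_le_mul_of_nonneg_right hεsm (vnorm_nonneg _)
    nlinarith [vnorm_nonneg x, hσ]
  set B := M.submatrix (Subtype.val : {i // i ∈ Cᶜ} → Fin n)
      (Subtype.val : {i // i ∈ Cᶜ} → Fin n) with hBdef
  set Bt := Mt.submatrix (Subtype.val : {i // i ∈ Cᶜ} → Fin n)
      (Subtype.val : {i // i ∈ Cᶜ} → Fin n) with hBtdef
  have hBsub : B - Bt = (M - Mt).submatrix Subtype.val Subtype.val := by
    ext i j; simp [hBdef, hBtdef, Matrix.sub_apply]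
  have hBd : frob (B - Bt) ≤ ε := by
    rw [hBsub]
    exact le_trans (frob_submatrix_le _ Subtype.val_injective Subtype.val_injective) hε
  have hBt_lb : ∀ x, (0.5 * σmin) * vnorm x ≤ vnorm (Bt.mulVec x) := by
    intro x
    have h1 := sigmaMin_lb hBmin x
    have h2 : vnorm (B.mulVec x) ≤ vnorm (Bt.mulVec x) + vnorm ((B - Bt).mulVec x) := by
      have hsplit : B.mulVec x = Bt.mulVec x + (B - Bt).mulVec x := by
        rw [Matrix.sub_mulVec]; abel
      rw [hsplit]; exact vnorm_add_le _ _
    have h3 : vnorm ((B - Bt).mulVec x) ≤ ε * vnorm x :=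
      le_trans (frob_mulVec_le _ _) (mul_le_mul_of_nonneg_right hBd (vnorm_nonneg _))
    have h4 : ε * vnorm x ≤ 0.1 * σmin * vnorm x :=
      mul_le_mul_of_nonneg_right hεsm (vnorm_nonneg _)
    nlinarith [vnorm_nonneg x, hσ]
  have hhalf : (0:ℝ) < 0.5 * σmin := by linarith
  have iMt : IsUnit Mt.det := isUnit_of_lb hhalf hMt_lb
  have iBt : IsUnit Bt.det := isUnit_of_lb hhalf hBt_lb
  have iB : IsUnit B.det := isUnit_of_lb hσ (sigmaMin_lb hBmin)
  refine ⟨iMt, iBt, ?_⟩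
  have hRHS0 : 0 ≤ (n : ℝ) ^ 30 * κ ^ 4 * ε :=
    mul_nonneg (mul_nonneg (by positivity) (by positivity)) hε0
  by_cases hCempty : C = ∅
  · haveI : IsEmpty {i // i ∈ C} :=
      ⟨fun x => (Finset.notMem_empty x.1 (hCempty ▸ x.2))⟩
    have hz : frob (schurCompl M C - schurCompl Mt C) = 0 := by
      rw [frob, Finset.univ_eq_empty, Finset.sum_empty, Real.sqrt_zero]
    rw [hz]; exact hRHS0
  by_cases hCcempty : Cᶜ = ∅
  · exfalso
    haveI hie : IsEmpty {i // i ∈ Cᶜ} :=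
      ⟨fun x => (Finset.notMem_empty x.1 (hCcempty ▸ x.2))⟩
    haveI : IsEmpty {x : ({i // i ∈ Cᶜ} → ℝ) // vnorm x = 1} := by
      refine ⟨fun x => ?_⟩
      have h2 := x.2
      rw [vnorm, Finset.univ_eq_empty, Finset.sum_empty, Real.sqrt_zero] at h2
      exact one_ne_zero h2.symm
    rw [sigmaMin, Real.iInf_of_isEmpty] at hBmin
    linarith
  -- main case : both C and Cᶜ nonempty, so n ≥ 2
  have hn2 : 2 ≤ n := by
    have h1 : 1 ≤ C.card := Finset.card_pos.mpr (Finset.nonempty_of_ne_empty hCempty)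
    have h2 : 1 ≤ Cᶜ.card := Finset.card_pos.mpr (Finset.nonempty_of_ne_empty hCcempty)
    have h3 : C.card + Cᶜ.card = n := by
      rw [Finset.card_add_card_compl, Fintype.card_fin]
    omega
  have hn2' : (2:ℝ) ≤ (n:ℝ) := by exact_mod_cast hn2
  set s := Real.sqrt n with hsdef
  have hsn : s * s = (n:ℝ) := Real.mul_self_sqrt (Nat.cast_nonneg n)
  have hs1 : 1 ≤ s := by
    rw [hsdef, show (1:ℝ) = Real.sqrt 1 from Real.sqrt_one.symm]
    exact Real.sqrt_le_sqrt (by linarith)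
  have hs0 : 0 ≤ s := by linarith
  -- column bound for frob M
  have hfrobM : frob M ≤ s * σmax := by
    have h := frob_le_of_cols M hX0.le fun j => by
      have := sigmaMax_ub hMmax (Pi.single j 1)
      rwa [vnorm_single, mul_one] at this
    rwa [Fintype.card_fin] at h
  set cv := (Subtype.val : {i // i ∈ C} → Fin n) with hcv
  set dv := (Subtype.val : {i // i ∈ Cᶜ} → Fin n) with hdv
  set A := M.submatrix cv cv
  set At := Mt.submatrix cv cv
  set E := M.submatrix cv dv
  set Et := Mt.submatrix cv dv
  set F := M.submatrix dv cv
  set Ft := Mt.submatrix dv cv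
  have hcard : (Fintype.card {i // i ∈ Cᶜ} : ℝ) ≤ (n:ℝ) := by
    have : Fintype.card {i // i ∈ Cᶜ} ≤ n := by
      rw [Fintype.card_coe]
      calc Cᶜ.card ≤ Fintype.card (Fin n) := Finset.card_le_univ _
        _ = n := Fintype.card_fin n
    exact_mod_cast this
  have hscard : Real.sqrt (Fintype.card {i // i ∈ Cᶜ}) ≤ s :=
    Real.sqrt_le_sqrt hcard
  have hE : frob E ≤ s * σmax :=
    le_trans (frob_submatrix_le M Subtype.val_injective Subtype.val_injective) hfrobM
  have hF : frob F ≤ s * σmax :=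
    le_trans (frob_submatrix_le M Subtype.val_injective Subtype.val_injective) hfrobM
  have hAd : frob (A - At) ≤ ε := by
    have he : A - At = (M - Mt).submatrix cv cv := by ext i j; simp only [Matrix.sub_apply]; rfl
    rw [he]
    exact le_trans (frob_submatrix_le _ Subtype.val_injective Subtype.val_injective) hε
  have hEd : frob (E - Et) ≤ ε := by
    have he : E - Et = (M - Mt).submatrix cv dv := by ext i j; simp only [Matrix.sub_apply]; rfl
    rw [he]
    exact le_trans (frob_submatrix_le _ Subtype.val_injective Subtype.val_injective) hε
  have hFd : frob (F - Ft) ≤ ε := by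
    have he : F - Ft = (M - Mt).submatrix dv cv := by ext i j; simp only [Matrix.sub_apply]; rfl
    rw [he]
    exact le_trans (frob_submatrix_le _ Subtype.val_injective Subtype.val_injective) hε
  have hBtBd : frob (Bt - B) ≤ ε := by rw [frob_sub_comm]; exact hBd
  have hσinv0 : (0:ℝ) ≤ σmin⁻¹ := by positivity
  have hBinv : frob B⁻¹ ≤ s * σmin⁻¹ :=
    le_trans (frob_inv_le hσ (sigmaMin_lb hBmin) iB)
      (mul_le_mul_of_nonneg_right hscard hσinv0)
  have hBtinv : frob Bt⁻¹ ≤ s * (2 * σmin⁻¹) := by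
    have h1 := frob_inv_le hhalf hBt_lb iBt
    have h2 : (0.5 * σmin)⁻¹ = 2 * σmin⁻¹ := by
      rw [mul_inv]; norm_num
    rw [h2] at h1
    exact le_trans h1 (mul_le_mul_of_nonneg_right hscard (by positivity))
  have hEt : frob Et ≤ s * σmax + ε := by
    have he : Et = E - (E - Et) := by abel
    rw [he]
    exact le_trans (frob_sub_le _ _) (add_le_add hE hEd)
  have hinvd : frob (B⁻¹ - Bt⁻¹) ≤ (s * σmin⁻¹) * ε * (s * (2 * σmin⁻¹)) := by
    have key : B⁻¹ - Bt⁻¹ = B⁻¹ * (Bt - B) * Bt⁻¹ := by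
      have h1 : B⁻¹ * (Bt - B) * Bt⁻¹ = B⁻¹ * Bt * Bt⁻¹ - B⁻¹ * B * Bt⁻¹ := by
        rw [Matrix.mul_sub, Matrix.sub_mul]
      rw [h1, Matrix.nonsing_inv_mul B iB, Matrix.one_mul, mul_assoc,
        Matrix.mul_nonsing_inv Bt iBt, Matrix.mul_one]
    rw [key]
    exact le_trans (frob_mul3_le _ _ _)
      (mul3_le hBinv hBtBd hBtinv (frob_nonneg _) (frob_nonneg _) (frob_nonneg _)
        (by positivity) hε0)
  -- the algebraic identity
  have key2 : schurCompl M C - schurCompl Mt C =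
      (A - At) - ((E - Et) * B⁻¹ * F + Et * (B⁻¹ - Bt⁻¹) * F + Et * Bt⁻¹ * (F - Ft)) := by
    have h0 : schurCompl M C = A - E * B⁻¹ * F := rfl
    have h1 : schurCompl Mt C = At - Et * Bt⁻¹ * Ft := rfl
    rw [h0, h1]
    simp only [Matrix.sub_mul, Matrix.mul_sub]
    abel
  -- per-term bounds
  have hεsX : ε ≤ s * σmax := by
    have hx : σmax ≤ s * σmax := le_mul_of_one_le_left hX0.le hs1
    linarith
  have h2sX : s * σmax + ε ≤ 2 * (s * σmax) := by linarith
  have hT1 : frob ((E - Et) * B⁻¹ * F) ≤ (n:ℝ) * κ * ε := by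
    refine le_trans (frob_mul3_le _ _ _) ?_
    refine le_trans (mul3_le hEd hBinv hF (frob_nonneg _) (frob_nonneg _) (frob_nonneg _)
      hε0 (by positivity)) ?_
    have heq : ε * (s * σmin⁻¹) * (s * σmax) = (s * s) * (σmax * σmin⁻¹) * ε := by ring
    rw [heq, hsn, ← div_eq_mul_inv]
  have hT2 : frob (Et * (B⁻¹ - Bt⁻¹) * F) ≤ 4 * ((n:ℝ)^2 * κ^2) * ε := by
    refine le_trans (frob_mul3_le _ _ _) ?_
    refine le_trans (mul3_le hEt hinvd hF (frob_nonneg _) (frob_nonneg _) (frob_nonneg _)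
      (by positivity) (by positivity)) ?_
    refine le_trans (mul3_le h2sX le_rfl le_rfl (by positivity) (by positivity)
      (by positivity) (by positivity) (by positivity)) ?_
    have heq : 2 * (s * σmax) * ((s * σmin⁻¹) * ε * (s * (2 * σmin⁻¹))) * (s * σmax) =
        4 * (((s*s) * (s*s)) * ((σmax * σmin⁻¹) * (σmax * σmin⁻¹))) * ε := by ring
    rw [heq, hsn, ← div_eq_mul_inv]
    have : (n:ℝ) * (n:ℝ) * (σmax / σmin * (σmax / σmin)) = (n:ℝ)^2 * κ^2 := by
      rw [hκdef]; ring
    rw [this]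
  have hT3 : frob (Et * Bt⁻¹ * (F - Ft)) ≤ 4 * ((n:ℝ) * κ) * ε := by
    refine le_trans (frob_mul3_le _ _ _) ?_
    refine le_trans (mul3_le hEt hBtinv hFd (frob_nonneg _) (frob_nonneg _) (frob_nonneg _)
      (by positivity) (by positivity)) ?_
    refine le_trans (mul3_le h2sX le_rfl le_rfl (by positivity) (by positivity)
      hε0 (by positivity) (by positivity)) ?_
    have heq : 2 * (s * σmax) * (s * (2 * σmin⁻¹)) * ε =
        4 * ((s*s) * (σmax * σmin⁻¹)) * ε := by ring
    rw [heq, hsn, ← div_eq_mul_inv]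
  -- combine
  have hsum : frob (schurCompl M C - schurCompl Mt C) ≤
      ε + ((n:ℝ) * κ * ε + 4 * ((n:ℝ)^2 * κ^2) * ε + 4 * ((n:ℝ) * κ) * ε) := by
    rw [key2]
    refine le_trans (frob_sub_le _ _) ?_
    refine add_le_add hAd ?_
    refine le_trans (frob_add_le _ _) ?_
    refine le_trans (add_le_add (frob_add_le _ _) hT3) ?_
    exact add_le_add (add_le_add hT1 hT2) le_rfl
  refine le_trans hsum ?_
  -- final numeric inequality
  have e1 : (1:ℝ) ≤ (n:ℝ) * κ := by
    calc (1:ℝ) = 1 * 1 := by norm_num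
      _ ≤ (n:ℝ) * κ := mul_le_mul (by linarith) hκ1 zero_le_one (by linarith)
  have e2 : (n:ℝ) * κ ≤ (n:ℝ)^2 * κ^2 := by
    have h := le_mul_of_one_le_left (b := (n:ℝ) * κ) (a := (n:ℝ) * κ) (le_trans zero_le_one e1) e1
    calc (n:ℝ) * κ ≤ ((n:ℝ) * κ) * ((n:ℝ) * κ) := h
      _ = (n:ℝ)^2 * κ^2 := by ring
  have e3 : ε + ((n:ℝ) * κ * ε + 4 * ((n:ℝ)^2 * κ^2) * ε + 4 * ((n:ℝ) * κ) * ε) ≤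
      10 * ((n:ℝ)^2 * κ^2) * ε := by
    have f1 := mul_le_mul_of_nonneg_right e1 hε0
    have f2 := mul_le_mul_of_nonneg_right e2 hε0
    rw [one_mul] at f1
    linarith
  refine le_trans e3 ?_
  have h28 : (10:ℝ) ≤ (n:ℝ)^28 := by
    calc (10:ℝ) ≤ 2^28 := by norm_num
      _ ≤ (n:ℝ)^28 := pow_le_pow_left₀ (by norm_num) hn2' 28
  have hκ2 : (1:ℝ) ≤ κ^2 := one_le_pow₀ hκ1
  have h10 : (10:ℝ) ≤ (n:ℝ)^28 * κ^2 :=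
    le_trans h28 (le_mul_of_one_le_right (by positivity) hκ2)
  have hfin : 10 * ((n:ℝ)^2 * κ^2) ≤ (n:ℝ)^30 * κ^4 := by
    have hpos : (0:ℝ) ≤ (n:ℝ)^2 * κ^2 := by positivity
    have := mul_le_mul_of_nonneg_right h10 hpos
    calc 10 * ((n:ℝ)^2 * κ^2) ≤ (n:ℝ)^28 * κ^2 * ((n:ℝ)^2 * κ^2) := this
      _ = (n:ℝ)^30 * κ^4 := by ring
  exact mul_le_mul_of_nonneg_right hfin hε0
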